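/- For finite posets P and Q on disjoint underlying sets, the complex of acyclic matchings on the disjoint union P ⊔ Q equals the join of the complexes of acyclic matchings on P and on Q: f(P ⊔ Q) = f(P) * f(Q). -/
import Mathlib


/-- An abstract simplicial complex on vertex type `V`: a collection of nonempty
finite subsets of `V` closed under passing to nonempty subsets. -/
structure ASC (V : Type*) where
  faces : Set (Finset V)
  nonempty_of_mem : ∀ {s : Finset V}, s ∈ faces → s.Nonempty
  down_closed : ∀ {s t : Finset V}, s ∈ faces → t ⊆ s → t.Nonempty → t ∈ faces

namespace ASC

variable {V W : Type*}

/-- A facet is a maximal face. -/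
def IsFacet (K : ASC V) (s : Finset V) : Prop :=
  s ∈ K.faces ∧ ∀ t ∈ K.faces, s ⊆ t → s = t

/-- `v` dominates `v'` if every facet containing `v'` also contains `v`. -/
def Dominates (K : ASC V) (v v' : V) : Prop :=
  v ≠ v' ∧ ∀ F, K.IsFacet F → v' ∈ F → v ∈ F

/-- Deletion of a vertex. -/
def delete (K : ASC V) (v' : V) : ASC V where
  faces := {s ∈ K.faces | v' ∉ s}
  nonempty_of_mem h := K.nonempty_of_mem h.1
  down_closed hs hts htne := ⟨K.down_closed hs.1 hts htne, fun hmem => hs.2 (hts hmem)⟩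

/-- The complex consisting of a single point. -/
def point (p : V) : ASC V where
  faces := {{p}}
  nonempty_of_mem h := by simp only [Set.mem_singleton_iff] at h; subst h; exact ⟨p, by simp⟩
  down_closed := by
    intro s t hs hts htne
    simp only [Set.mem_singleton_iff] at *
    subst hs
    rcases Finset.subset_singleton_iff.mp hts with h | h
    · exact absurd h (Finset.nonempty_iff_ne_empty.mp htne)
    · exact h

/-- Elementary strong collapses from `K` to `L`. -/
inductive StrongCollapsesTo : ASC V → ASC V → Prop
  | refl (K : ASC V) : StrongCollapsesTo K K
  | step {K L : ASC V} (v v' : V) : K.Dominates v v' →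
      StrongCollapsesTo (K.delete v') L → StrongCollapsesTo K L

/-- A complex is strongly collapsible if it strong collapses to a point. -/
def StronglyCollapsible (K : ASC V) : Prop :=
  ∃ p : V, StrongCollapsesTo K (ASC.point p)

/-- Elementary collapses (free face removals) from `K` to `L`. -/
inductive CollapsesTo : ASC V → ASC V → Prop
  | refl (K : ASC V) : CollapsesTo K K
  | step {K L M : ASC V} (σ τ : Finset V) :
      σ ∈ K.faces → τ ∈ K.faces → σ ⊂ τ →
      (∀ ρ ∈ K.faces, σ ⊂ ρ → ρ = τ) →
      L.faces = K.faces \ {σ, τ} →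
      CollapsesTo L M → CollapsesTo K M

/-- A complex is collapsible if it collapses to a point. -/
def Collapsible (K : ASC V) : Prop :=
  ∃ p : V, CollapsesTo K (ASC.point p)

/-- The image complex along a vertex map. -/
def map [DecidableEq W] (f : V → W) (K : ASC V) : ASC W where
  faces := (Finset.image f) '' K.faces
  nonempty_of_mem := by
    rintro s ⟨t, ht, rfl⟩
    exact (K.nonempty_of_mem ht).image f
  down_closed := by
    rintro s t ⟨u, hu, rfl⟩ hts htne
    obtain ⟨w, hw, rfl⟩ := Finset.subset_image_iff.mp hts
    exact ⟨w, K.down_closed hu hw (Finset.image_nonempty.mp htne), rfl⟩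

/-- The join of two complexes on a common vertex type (intended for complexes
with disjoint vertex sets). -/
def join [DecidableEq V] (A B : ASC V) : ASC V where
  faces := A.faces ∪ B.faces ∪ {s | ∃ a ∈ A.faces, ∃ b ∈ B.faces, s = a ∪ b}
  nonempty_of_mem := by
    rintro s (⟨h | h⟩ | ⟨a, ha, b, hb, rfl⟩)
    · exact A.nonempty_of_mem h
    · exact B.nonempty_of_mem h
    · exact (A.nonempty_of_mem ha).mono Finset.subset_union_left
  down_closed := by
    rintro s t (⟨h | h⟩ | ⟨a, ha, b, hb, rfl⟩) hts htne
    · exact Or.inl (Or.inl (A.down_closed h hts htne))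
    · exact Or.inl (Or.inr (B.down_closed h hts htne))
    · by_cases hta : (t ∩ a).Nonempty
      · by_cases htb : (t \ a).Nonempty
        · refine Or.inr ⟨t ∩ a, A.down_closed ha Finset.inter_subset_right hta,
            t \ a, B.down_closed hb ?_ htb, by ext x; simp only [Finset.mem_union, Finset.mem_inter, Finset.mem_sdiff]; tauto⟩
          intro x hx
          rcases Finset.mem_union.mp (hts (Finset.mem_sdiff.mp hx).1) with h1 | h1
          · exact absurd h1 (Finset.mem_sdiff.mp hx).2
          · exact h1
        · refine Or.inl (Or.inl (A.down_closed ha ?_ htne))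
          intro x hx
          by_contra hxa
          exact htb ⟨x, Finset.mem_sdiff.mpr ⟨hx, hxa⟩⟩
      · refine Or.inl (Or.inr (B.down_closed hb ?_ htne))
        intro x hx
        rcases Finset.mem_union.mp (hts hx) with h1 | h1
        · exact absurd ⟨x, Finset.mem_inter.mpr ⟨hx, h1⟩⟩ hta
        · exact h1

/-- Disjoint union of two complexes. -/
def disjUnion [DecidableEq V] [DecidableEq W] (K : ASC V) (L : ASC W) : ASC (V ⊕ W) where
  faces := (K.map Sum.inl).faces ∪ (L.map Sum.inr).faces
  nonempty_of_mem := by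
    rintro s (h | h)
    · exact (K.map Sum.inl).nonempty_of_mem h
    · exact (L.map Sum.inr).nonempty_of_mem h
  down_closed := by
    rintro s t (h | h) hts htne
    · exact Or.inl ((K.map Sum.inl).down_closed h hts htne)
    · exact Or.inr ((L.map Sum.inr).down_closed h hts htne)

/-- Connectivity of a complex via edge paths. -/
def Connected [DecidableEq V] (K : ASC V) : Prop :=
  ∀ u v : V, {u} ∈ K.faces → {v} ∈ K.faces →
    ∃ (k : ℕ) (c : ℕ → V), c 0 = u ∧ c k = v ∧
      ∀ i < k, ({c i, c (i + 1)} : Finset V) ∈ K.faces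

/-- A flag complex: every set of pairwise adjacent vertices spans a simplex. -/
def IsFlag [DecidableEq V] (K : ASC V) : Prop :=
  ∀ s : Finset V, s.Nonempty → (∀ v ∈ s, ({v} : Finset V) ∈ K.faces) →
    (∀ u ∈ s, ∀ v ∈ s, u ≠ v → ({u, v} : Finset V) ∈ K.faces) → s ∈ K.faces

/-- A tree: a connected `1`-dimensional complex with no (injective) cycles. -/
def IsTree [DecidableEq V] (K : ASC V) : Prop :=
  (∀ s ∈ K.faces, s.card ≤ 2) ∧ K.Connected ∧
    ¬ ∃ (k : ℕ) (c : ℕ → V), 3 ≤ k ∧ (∀ i < k, ∀ j < k, c i = c j → i = j) ∧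
      (∀ i < k, ({c i, c (i + 1)} : Finset V) ∈ K.faces) ∧ c k = c 0

/-- The star of a vertex. -/
def star [DecidableEq V] (K : ASC V) (v : V) : ASC V where
  faces := {s ∈ K.faces | insert v s ∈ K.faces}
  nonempty_of_mem h := K.nonempty_of_mem h.1
  down_closed := by
    rintro s t ⟨hs, hvs⟩ hts htne
    exact ⟨K.down_closed hs hts htne,
      K.down_closed hvs (Finset.insert_subset_insert v hts) (Finset.insert_nonempty v t)⟩

/-- The star cluster of a simplex. -/
def starCluster [DecidableEq V] (K : ASC V) (σ : Finset V) : ASC V where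
  faces := ⋃ v ∈ σ, (K.star v).faces
  nonempty_of_mem := by
    rintro s hs
    simp only [Set.mem_iUnion] at hs
    obtain ⟨v, _, hv⟩ := hs
    exact (K.star v).nonempty_of_mem hv
  down_closed := by
    intro s t hs hts htne
    simp only [Set.mem_iUnion] at *
    obtain ⟨v, hvσ, hv⟩ := hs
    exact ⟨v, hvσ, (K.star v).down_closed hv hts htne⟩

end ASC

/-- A nontrivial closed V-path for a discrete vector field. -/
def hasClosedPath {V : Type*} (S : Set (Finset V × Finset V)) : Prop :=
  ∃ (k : ℕ) (α β : ℕ → Finset V), 0 < k ∧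
    (∀ i < k, (α i, β i) ∈ S ∧ α (i + 1) ⊆ β i ∧
      (β i).card = (α (i + 1)).card + 1 ∧ α (i + 1) ≠ α i) ∧
    α k = α 0

theorem hasClosedPath.mono {V : Type*} {S T : Set (Finset V × Finset V)}
    (h : hasClosedPath S) (hST : S ⊆ T) : hasClosedPath T := by
  obtain ⟨k, α, β, hk, hstep, hcl⟩ := h
  exact ⟨k, α, β, hk, fun i hi => ⟨hST (hstep i hi).1, (hstep i hi).2.1,
    (hstep i hi).2.2.1, (hstep i hi).2.2.2⟩, hcl⟩

/-- A discrete vector field on a collection `C` of simplices: codimension-one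
pairs from `C` with each simplex occurring in at most one pair. -/
def IsMatching {V : Type*} (C : Set (Finset V)) (M : Set (Finset V × Finset V)) : Prop :=
  (∀ p ∈ M, p.1 ∈ C ∧ p.2 ∈ C ∧ p.1 ⊆ p.2 ∧ p.2.card = p.1.card + 1) ∧
  (∀ p ∈ M, ∀ q ∈ M, p ≠ q → p.1 ≠ q.1 ∧ p.1 ≠ q.2 ∧ p.2 ≠ q.1 ∧ p.2 ≠ q.2)

/-- An acyclic matching: a discrete vector field with no nontrivial closed V-path. -/
def IsAcyclicMatching {V : Type*} (C : Set (Finset V)) (M : Set (Finset V × Finset V)) : Prop :=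
  IsMatching C M ∧ ¬ hasClosedPath M

/-- A gradient vector field on a complex `K`. -/
def IsGVF {V : Type*} (K : ASC V) (S : Set (Finset V × Finset V)) : Prop :=
  IsAcyclicMatching K.faces S

theorem IsGVF.mono {V : Type*} {K : ASC V} {S T : Set (Finset V × Finset V)}
    (h : IsGVF K T) (hST : S ⊆ T) : IsGVF K S :=
  ⟨⟨fun p hp => h.1.1 p (hST hp), fun p hp q hq => h.1.2 p (hST hp) q (hST hq)⟩,
    fun hc => h.2 (hc.mono hST)⟩

/-- The Morse complex of `K`: vertices are primitive gradient vector fields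
(codimension-one pairs), faces are gradient vector fields. -/
def MorseComplex {V : Type*} (K : ASC V) : ASC (Finset V × Finset V) where
  faces := {s | s.Nonempty ∧ IsGVF K ↑s}
  nonempty_of_mem h := h.1
  down_closed := by
    intro s t hs hts htne
    exact ⟨htne, hs.2.mono (Finset.coe_subset.mpr hts)⟩

section Spaces

/-- The geometric realization of a complex on a finite vertex type. -/
abbrev ASC.realization {V : Type*} [Fintype V] (K : ASC V) : Type _ :=
  {f : V → ℝ // (∀ v, 0 ≤ f v) ∧ (∑ v, f v) = 1 ∧ ∃ s ∈ K.faces, ∀ v, f v ≠ 0 → v ∈ s}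

/-- The `n`-sphere. -/
abbrev Sph (n : ℕ) := Metric.sphere (0 : EuclideanSpace ℝ (Fin (n + 1))) 1

noncomputable def spherePt (n : ℕ) : Sph n :=
  ⟨EuclideanSpace.single 0 1, by
    simp [mem_sphere_zero_iff_norm, EuclideanSpace.norm_single]⟩

/-- The wedge of `k` copies of the `n`-sphere (a point if `k = 0`). -/
def Wedge (k n : ℕ) : Type :=
  Quot (fun p q : (Fin k × Sph n) ⊕ Unit =>
    (∃ i : Fin k, p = Sum.inl (i, spherePt n)) ∧ q = Sum.inr ())

noncomputable instance (k n : ℕ) : TopologicalSpace (Wedge k n) := by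
  unfold Wedge; infer_instance

/-- Unreduced suspension. -/
def Susp (X : Type*) [TopologicalSpace X] : Type _ :=
  Quot (fun p q : X × unitInterval => p.2 = q.2 ∧ (p.2 = 0 ∨ p.2 = 1))

instance (X : Type*) [TopologicalSpace X] : TopologicalSpace (Susp X) := by
  unfold Susp; infer_instance

/-- Iterated suspension, as an operation on bundled topological spaces. -/
noncomputable def iterSusp : ℕ → TopCat → TopCat
  | 0, X => X
  | (n + 1), X => TopCat.of (Susp (iterSusp n X))

end Spaces

section Graphs

/-- The `1`-dimensional complex spanned by a set of (edge) finsets. -/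
def graphASC {V : Type*} (E : Set (Finset V)) : ASC V where
  faces := {s | s.Nonempty ∧ ∃ e ∈ E, s ⊆ e}
  nonempty_of_mem h := h.1
  down_closed := by
    rintro s t ⟨_, e, he, hse⟩ hts htne
    exact ⟨htne, e, he, hts.trans hse⟩

/-- The path of length `u` on vertices `0, 1, …, u`. -/
def pathComplex (u : ℕ) : ASC (Fin (u + 1)) :=
  graphASC {e | ∃ i : Fin u, e = {i.castSucc, i.succ}}

/-- Vertex type for a path of length `t` with extended stars `S_{m,n}` and
`S_{k,l}` attached at the two endpoints. -/
abbrev WGV (t m n k l : ℕ) :=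
  Fin (t + 1) ⊕ (Fin m ⊕ Fin n × Fin 2) ⊕ (Fin k ⊕ Fin l × Fin 2)

/-- The graph `P_t ∨ S_{m,n} ∨ S_{k,l}`: the extended star `S_{m,n}` (a one-point
union of `m` paths of length 1 and `n` paths of length 2) has its center at the
endpoint `v₀` of the path, and `S_{k,l}` has its center at the endpoint `v_t`.
With `t = 0` (and `k = l = 0`) this is the extended star graph `S_{m,n}` itself. -/
def wedgeGraph (t m n k l : ℕ) : ASC (WGV t m n k l) :=
  graphASC {e |
    (∃ i : Fin t, e = {Sum.inl i.castSucc, Sum.inl i.succ}) ∨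
    (∃ j : Fin m, e = {Sum.inl 0, Sum.inr (Sum.inl (Sum.inl j))}) ∨
    (∃ i : Fin n, e = {Sum.inl 0, Sum.inr (Sum.inl (Sum.inr (i, 0)))}) ∨
    (∃ i : Fin n, e = {Sum.inr (Sum.inl (Sum.inr (i, 0))), Sum.inr (Sum.inl (Sum.inr (i, 1)))}) ∨
    (∃ j : Fin k, e = {Sum.inl (Fin.last t), Sum.inr (Sum.inr (Sum.inl j))}) ∨
    (∃ s : Fin l, e = {Sum.inl (Fin.last t), Sum.inr (Sum.inr (Sum.inr (s, 0)))}) ∨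
    (∃ s : Fin l, e = {Sum.inr (Sum.inr (Sum.inr (s, 0))), Sum.inr (Sum.inr (Sum.inr (s, 1)))})}

/-- `K ∨_v P_m`: attach a path of length `m` to the vertex `v` of `K` by one
endpoint. -/
def attachPath {V : Type*} [DecidableEq V] (K : ASC V) (v : V) (m : ℕ) : ASC (V ⊕ Fin m) where
  faces := (K.map Sum.inl).faces ∪
    {s | s.Nonempty ∧ ∃ e : Finset (V ⊕ Fin m),
      ((∃ i : Fin m, i.val = 0 ∧ e = {Sum.inl v, Sum.inr i}) ∨
       (∃ i j : Fin m, j.val = i.val + 1 ∧ e = {Sum.inr i, Sum.inr j})) ∧ s ⊆ e}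
  nonempty_of_mem := by
    rintro s (h | h)
    · exact (K.map Sum.inl).nonempty_of_mem h
    · exact h.1
  down_closed := by
    rintro s t (h | ⟨_, e, he, hse⟩) hts htne
    · exact Or.inl ((K.map Sum.inl).down_closed h hts htne)
    · exact Or.inr ⟨htne, e, he, hts.trans hse⟩

end Graphs

section Posets

/-- An alternating cycle `b₁ ≻ a₁ ≺ b₂ ≻ a₂ ≺ ⋯ ≺ b_p ≻ a_p ≺ b₁` for a set of
covering pairs in a poset. -/
def HasPosetCycle {P : Type*} [PartialOrder P] (S : Set (P × P)) : Prop :=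
  ∃ p : ℕ, 2 ≤ p ∧ ∃ a b : ℕ → P,
    (∀ i < p, (a i, b i) ∈ S) ∧
    (∀ i < p, a i ⋖ b ((i + 1) % p)) ∧
    (∀ i < p, ∀ j < p, a i = a j → i = j) ∧
    (∀ i < p, ∀ j < p, b i = b j → i = j)

theorem HasPosetCycle.mono {P : Type*} [PartialOrder P] {S T : Set (P × P)}
    (h : HasPosetCycle S) (hST : S ⊆ T) : HasPosetCycle T := by
  obtain ⟨p, hp, a, b, h1, h2, h3, h4⟩ := h
  exact ⟨p, hp, a, b, fun i hi => hST (h1 i hi), h2, h3, h4⟩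

/-- The complex `f(P)` of acyclic matchings on the Hasse diagram of a poset `P`:
vertices are covering pairs, faces are acyclic matchings. -/
def posetMatchingComplex (P : Type*) [PartialOrder P] : ASC (P × P) where
  faces := {s | s.Nonempty ∧ (∀ p ∈ s, p.1 ⋖ p.2) ∧
    (∀ p ∈ s, ∀ q ∈ s, p ≠ q → p.1 ≠ q.1 ∧ p.1 ≠ q.2 ∧ p.2 ≠ q.1 ∧ p.2 ≠ q.2) ∧
    ¬ HasPosetCycle (↑s : Set (P × P))}
  nonempty_of_mem h := h.1
  down_closed := by
    intro s t hs hts htne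
    refine ⟨htne, fun p hp => hs.2.1 p (hts hp),
      fun p hp q hq => hs.2.2.1 p (hts hp) q (hts hq), fun hc => hs.2.2.2 ?_⟩
    exact hc.mono (Finset.coe_subset.mpr hts)

end Posets


section SumAux

variable {P Q : Type*} [PartialOrder P] [PartialOrder Q]

lemma sum_inl_covBy_inl_iff {a b : P} :
    (Sum.inl a : P ⊕ Q) ⋖ Sum.inl b ↔ a ⋖ b := by
  constructor
  · intro h
    exact ⟨Sum.inl_lt_inl_iff.1 h.1,
      fun c hc1 hc2 => h.2 (Sum.inl_lt_inl_iff.2 hc1) (Sum.inl_lt_inl_iff.2 hc2)⟩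
  · intro h
    refine ⟨Sum.inl_lt_inl_iff.2 h.1, ?_⟩
    rintro (c | c) hc1 hc2
    · exact h.2 (Sum.inl_lt_inl_iff.1 hc1) (Sum.inl_lt_inl_iff.1 hc2)
    · exact Sum.not_inr_le_inl hc2.le

lemma sum_inr_covBy_inr_iff {a b : Q} :
    (Sum.inr a : P ⊕ Q) ⋖ Sum.inr b ↔ a ⋖ b := by
  constructor
  · intro h
    exact ⟨Sum.inr_lt_inr_iff.1 h.1,
      fun c hc1 hc2 => h.2 (Sum.inr_lt_inr_iff.2 hc1) (Sum.inr_lt_inr_iff.2 hc2)⟩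
  · intro h
    refine ⟨Sum.inr_lt_inr_iff.2 h.1, ?_⟩
    rintro (c | c) hc1 hc2
    · exact Sum.not_inl_le_inr hc2.le
    · exact h.2 (Sum.inr_lt_inr_iff.1 hc1) (Sum.inr_lt_inr_iff.1 hc2)

lemma sum_covBy_cases {x y : P ⊕ Q} (h : x ⋖ y) :
    (∃ a b, x = Sum.inl a ∧ y = Sum.inl b) ∨ (∃ a b, x = Sum.inr a ∧ y = Sum.inr b) := by
  rcases x with a | a <;> rcases y with b | b
  · exact Or.inl ⟨a, b, rfl, rfl⟩
  · exact absurd h.1.le Sum.not_inl_le_inr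
  · exact absurd h.1.le Sum.not_inr_le_inl
  · exact Or.inr ⟨a, b, rfl, rfl⟩

lemma sum_covBy_isLeft {x y : P ⊕ Q} (h : x ⋖ y) : x.isLeft = y.isLeft := by
  rcases sum_covBy_cases h with ⟨a, b, rfl, rfl⟩ | ⟨a, b, rfl, rfl⟩ <;> rfl

lemma hasPosetCycle_image_inl {S : Set (P × P)} (h : HasPosetCycle S) :
    HasPosetCycle ((fun p : P × P => ((Sum.inl p.1 : P ⊕ Q), (Sum.inl p.2 : P ⊕ Q))) '' S) := by
  obtain ⟨p, hp, a, b, h1, h2, h3, h4⟩ := h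
  refine ⟨p, hp, fun i => Sum.inl (a i), fun i => Sum.inl (b i), ?_, ?_, ?_, ?_⟩
  · intro i hi; exact ⟨(a i, b i), h1 i hi, rfl⟩
  · intro i hi; exact sum_inl_covBy_inl_iff.2 (h2 i hi)
  · intro i hi j hj hij; exact h3 i hi j hj (Sum.inl_injective hij)
  · intro i hi j hj hij; exact h4 i hi j hj (Sum.inl_injective hij)

lemma hasPosetCycle_image_inr {S : Set (Q × Q)} (h : HasPosetCycle S) :
    HasPosetCycle ((fun p : Q × Q => ((Sum.inr p.1 : P ⊕ Q), (Sum.inr p.2 : P ⊕ Q))) '' S) := by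
  obtain ⟨p, hp, a, b, h1, h2, h3, h4⟩ := h
  refine ⟨p, hp, fun i => Sum.inr (a i), fun i => Sum.inr (b i), ?_, ?_, ?_, ?_⟩
  · intro i hi; exact ⟨(a i, b i), h1 i hi, rfl⟩
  · intro i hi; exact sum_inr_covBy_inr_iff.2 (h2 i hi)
  · intro i hi j hj hij; exact h3 i hi j hj (Sum.inr_injective hij)
  · intro i hi j hj hij; exact h4 i hi j hj (Sum.inr_injective hij)

lemma hasPosetCycle_union_cases {SA : Set (P × P)} {SB : Set (Q × Q)}
    (h : HasPosetCycle ((fun p : P × P => ((Sum.inl p.1 : P ⊕ Q), (Sum.inl p.2 : P ⊕ Q))) '' SA ∪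
      (fun p : Q × Q => ((Sum.inr p.1 : P ⊕ Q), (Sum.inr p.2 : P ⊕ Q))) '' SB)) :
    HasPosetCycle SA ∨ HasPosetCycle SB := by
  obtain ⟨p, hp, a, b, h1, h2, h3, h4⟩ := h
  have hab : ∀ i < p, (a i).isLeft = (b i).isLeft := by
    intro i hi
    rcases h1 i hi with ⟨⟨x, y⟩, _, hxy⟩ | ⟨⟨x, y⟩, _, hxy⟩ <;>
      (simp only [Prod.mk.injEq] at hxy; rw [← hxy.1, ← hxy.2])
    all_goals rfl
  have hstep : ∀ i < p, (a ((i + 1) % p)).isLeft = (a i).isLeft := by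
    intro i hi
    have h5 := sum_covBy_isLeft (h2 i hi)
    rw [h5]; exact hab _ (Nat.mod_lt _ (by omega))
  have hall : ∀ i, i < p → (a i).isLeft = (a 0).isLeft := by
    intro i
    induction i with
    | zero => intro _; rfl
    | succ n ih =>
      intro hi
      have hn : n < p := by omega
      have hs := hstep n hn
      rw [Nat.mod_eq_of_lt hi] at hs
      rw [hs]; exact ih hn
  by_cases hL : (a 0).isLeft = true
  · left
    obtain ⟨x0, hx0⟩ := Sum.isLeft_iff.1 hL
    have key : ∀ i < p, ∃ x y, a i = Sum.inl x ∧ b i = Sum.inl y ∧ (x, y) ∈ SA := by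
      intro i hi
      rcases h1 i hi with ⟨⟨x, y⟩, hxyA, hxy⟩ | ⟨⟨x, y⟩, hxyB, hxy⟩
      · simp only [Prod.mk.injEq] at hxy
        exact ⟨x, y, hxy.1.symm, hxy.2.symm, hxyA⟩
      · simp only [Prod.mk.injEq] at hxy
        exfalso
        have hi0 := hall i hi
        rw [← hxy.1, hL] at hi0
        simp at hi0
    set a' : ℕ → P := fun i => ((a i).getLeft?).getD x0 with ha'def
    set b' : ℕ → P := fun i => ((b i).getLeft?).getD x0 with hb'def
    have ha' : ∀ i < p, a i = Sum.inl (a' i) := by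
      intro i hi
      obtain ⟨x, y, hx, hy, _⟩ := key i hi
      rw [hx]; simp [ha'def, hx]
    have hb' : ∀ i < p, b i = Sum.inl (b' i) := by
      intro i hi
      obtain ⟨x, y, hx, hy, _⟩ := key i hi
      rw [hy]; simp [hb'def, hy]
    refine ⟨p, hp, a', b', ?_, ?_, ?_, ?_⟩
    · intro i hi
      obtain ⟨x, y, hx, hy, hm⟩ := key i hi
      have e1 : x = a' i := Sum.inl_injective (hx.symm.trans (ha' i hi))
      have e2 : y = b' i := Sum.inl_injective (hy.symm.trans (hb' i hi))
      rw [← e1, ← e2]; exact hm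
    · intro i hi
      have hj : (i + 1) % p < p := Nat.mod_lt _ (by omega)
      have hc := h2 i hi
      rw [ha' i hi, hb' _ hj] at hc
      exact sum_inl_covBy_inl_iff.1 hc
    · intro i hi j hj hij
      exact h3 i hi j hj ((ha' i hi).trans ((congrArg Sum.inl hij).trans (ha' j hj).symm))
    · intro i hi j hj hij
      exact h4 i hi j hj ((hb' i hi).trans ((congrArg Sum.inl hij).trans (hb' j hj).symm))
  · right
    have hL' : (a 0).isLeft = false := by
      cases hfl : (a 0).isLeft
      · rfl
      · exact absurd hfl hL
    obtain ⟨x0, hx0⟩ := Sum.isRight_iff.1 (by rw [← Sum.not_isLeft, hL']; simp)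
    have key : ∀ i < p, ∃ x y, a i = Sum.inr x ∧ b i = Sum.inr y ∧ (x, y) ∈ SB := by
      intro i hi
      rcases h1 i hi with ⟨⟨x, y⟩, hxyA, hxy⟩ | ⟨⟨x, y⟩, hxyB, hxy⟩
      · simp only [Prod.mk.injEq] at hxy
        exfalso
        have hi0 := hall i hi
        rw [← hxy.1, hL'] at hi0
        simp at hi0
      · simp only [Prod.mk.injEq] at hxy
        exact ⟨x, y, hxy.1.symm, hxy.2.symm, hxyB⟩
    set a' : ℕ → Q := fun i => ((a i).getRight?).getD x0 with ha'def
    set b' : ℕ → Q := fun i => ((b i).getRight?).getD x0 with hb'def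
    have ha' : ∀ i < p, a i = Sum.inr (a' i) := by
      intro i hi
      obtain ⟨x, y, hx, hy, _⟩ := key i hi
      rw [hx]; simp [ha'def, hx]
    have hb' : ∀ i < p, b i = Sum.inr (b' i) := by
      intro i hi
      obtain ⟨x, y, hx, hy, _⟩ := key i hi
      rw [hy]; simp [hb'def, hy]
    refine ⟨p, hp, a', b', ?_, ?_, ?_, ?_⟩
    · intro i hi
      obtain ⟨x, y, hx, hy, hm⟩ := key i hi
      have e1 : x = a' i := Sum.inr_injective (hx.symm.trans (ha' i hi))
      have e2 : y = b' i := Sum.inr_injective (hy.symm.trans (hb' i hi))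
      rw [← e1, ← e2]; exact hm
    · intro i hi
      have hj : (i + 1) % p < p := Nat.mod_lt _ (by omega)
      have hc := h2 i hi
      rw [ha' i hi, hb' _ hj] at hc
      exact sum_inr_covBy_inr_iff.1 hc
    · intro i hi j hj hij
      exact h3 i hi j hj ((ha' i hi).trans ((congrArg Sum.inr hij).trans (ha' j hj).symm))
    · intro i hi j hj hij
      exact h4 i hi j hj ((hb' i hi).trans ((congrArg Sum.inr hij).trans (hb' j hj).symm))

lemma ASC.faces_ext {V : Type*} {K L : ASC V} (h : K.faces = L.faces) : K = L := by
  cases K; cases L; cases h; rfl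

variable [DecidableEq P] [DecidableEq Q]

lemma sum_union_image_mem (A : Finset (P × P)) (B : Finset (Q × Q))
    (hA : A.Nonempty → A ∈ (posetMatchingComplex P).faces)
    (hB : B.Nonempty → B ∈ (posetMatchingComplex Q).faces)
    (hne : (A.image (fun p : P × P => ((Sum.inl p.1 : P ⊕ Q), (Sum.inl p.2 : P ⊕ Q))) ∪
        B.image (fun p : Q × Q => ((Sum.inr p.1 : P ⊕ Q), (Sum.inr p.2 : P ⊕ Q)))).Nonempty) :
    A.image (fun p : P × P => ((Sum.inl p.1 : P ⊕ Q), (Sum.inl p.2 : P ⊕ Q))) ∪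
      B.image (fun p : Q × Q => ((Sum.inr p.1 : P ⊕ Q), (Sum.inr p.2 : P ⊕ Q))) ∈
      (posetMatchingComplex (P ⊕ Q)).faces := by
  refine ⟨hne, ?_, ?_, ?_⟩
  · intro x hx
    rcases Finset.mem_union.1 hx with hx | hx
    · obtain ⟨q, hq, rfl⟩ := Finset.mem_image.1 hx
      exact sum_inl_covBy_inl_iff.2 ((hA ⟨q, hq⟩).2.1 q hq)
    · obtain ⟨q, hq, rfl⟩ := Finset.mem_image.1 hx
      exact sum_inr_covBy_inr_iff.2 ((hB ⟨q, hq⟩).2.1 q hq)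
  · intro x hx y hy hxy
    rcases Finset.mem_union.1 hx with hx | hx <;> rcases Finset.mem_union.1 hy with hy | hy
    · obtain ⟨q, hq, rfl⟩ := Finset.mem_image.1 hx
      obtain ⟨r, hr, rfl⟩ := Finset.mem_image.1 hy
      obtain ⟨d1, d2, d3, d4⟩ := (hA ⟨q, hq⟩).2.2.1 q hq r hr (fun h => hxy (by rw [h]))
      exact ⟨fun h => d1 (Sum.inl_injective h), fun h => d2 (Sum.inl_injective h),
        fun h => d3 (Sum.inl_injective h), fun h => d4 (Sum.inl_injective h)⟩
    · obtain ⟨q, hq, rfl⟩ := Finset.mem_image.1 hx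
      obtain ⟨r, hr, rfl⟩ := Finset.mem_image.1 hy
      exact ⟨by simp, by simp, by simp, by simp⟩
    · obtain ⟨q, hq, rfl⟩ := Finset.mem_image.1 hx
      obtain ⟨r, hr, rfl⟩ := Finset.mem_image.1 hy
      exact ⟨by simp, by simp, by simp, by simp⟩
    · obtain ⟨q, hq, rfl⟩ := Finset.mem_image.1 hx
      obtain ⟨r, hr, rfl⟩ := Finset.mem_image.1 hy
      obtain ⟨d1, d2, d3, d4⟩ := (hB ⟨q, hq⟩).2.2.1 q hq r hr (fun h => hxy (by rw [h]))
      exact ⟨fun h => d1 (Sum.inr_injective h), fun h => d2 (Sum.inr_injective h),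
        fun h => d3 (Sum.inr_injective h), fun h => d4 (Sum.inr_injective h)⟩
  · intro hc
    rw [Finset.coe_union, Finset.coe_image, Finset.coe_image] at hc
    rcases hasPosetCycle_union_cases hc with h | h
    · obtain ⟨pp, _, a, b, h1, _, _, _⟩ := h
      exact (hA ⟨(a 0, b 0), h1 0 (by omega)⟩).2.2.2 ⟨pp, ‹2 ≤ pp›, a, b, h1, by assumption, by assumption, by assumption⟩
    · obtain ⟨pp, _, a, b, h1, _, _, _⟩ := h
      exact (hB ⟨(a 0, b 0), h1 0 (by omega)⟩).2.2.2 ⟨pp, ‹2 ≤ pp›, a, b, h1, by assumption, by assumption, by assumption⟩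

end SumAux

/-- For finite posets `P` and `Q`, the complex of acyclic matchings on
the disjoint union `P ⊕ Q` is the join: `f(P ⊔ Q) = f(P) * f(Q)`. -/
theorem posetMatchingComplex_sum {P Q : Type*} [PartialOrder P] [PartialOrder Q]
    [DecidableEq P] [DecidableEq Q] [Fintype P] [Fintype Q] :
    posetMatchingComplex (P ⊕ Q) =
      ASC.join
        ((posetMatchingComplex P).map (fun p => (Sum.inl p.1, Sum.inl p.2)))
        ((posetMatchingComplex Q).map (fun p => (Sum.inr p.1, Sum.inr p.2))) := by
  apply ASC.faces_ext
  ext s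
  constructor
  · rintro ⟨hne, hcov, hdis, hcyc⟩
    have hFinj : Function.Injective
        (fun p : P × P => ((Sum.inl p.1 : P ⊕ Q), (Sum.inl p.2 : P ⊕ Q))) := by
      intro p q h
      rw [Prod.ext_iff] at h ⊢
      exact ⟨Sum.inl_injective h.1, Sum.inl_injective h.2⟩
    have hGinj : Function.Injective
        (fun p : Q × Q => ((Sum.inr p.1 : P ⊕ Q), (Sum.inr p.2 : P ⊕ Q))) := by
      intro p q h
      rw [Prod.ext_iff] at h ⊢
      exact ⟨Sum.inr_injective h.1, Sum.inr_injective h.2⟩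
    set sP := s.preimage (fun p : P × P => ((Sum.inl p.1 : P ⊕ Q), (Sum.inl p.2 : P ⊕ Q)))
      hFinj.injOn with hsPdef
    set sQ := s.preimage (fun p : Q × Q => ((Sum.inr p.1 : P ⊕ Q), (Sum.inr p.2 : P ⊕ Q)))
      hGinj.injOn with hsQdef
    have hsplit : s = sP.image (fun p : P × P => ((Sum.inl p.1 : P ⊕ Q), (Sum.inl p.2 : P ⊕ Q))) ∪
        sQ.image (fun p : Q × Q => ((Sum.inr p.1 : P ⊕ Q), (Sum.inr p.2 : P ⊕ Q))) := by
      ext x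
      simp only [Finset.mem_union, Finset.mem_image, Finset.mem_preimage, hsPdef, hsQdef]
      constructor
      · intro hx
        rcases sum_covBy_cases (hcov x hx) with ⟨a, b, h1, h2⟩ | ⟨a, b, h1, h2⟩
        · have hx' : ((Sum.inl a : P ⊕ Q), (Sum.inl b : P ⊕ Q)) = x :=
            Prod.ext_iff.2 ⟨h1.symm, h2.symm⟩
          exact Or.inl ⟨(a, b),
            (by rw [hx']; exact hx : ((Sum.inl a : P ⊕ Q), (Sum.inl b : P ⊕ Q)) ∈ s), hx'⟩
        · have hx' : ((Sum.inr a : P ⊕ Q), (Sum.inr b : P ⊕ Q)) = x :=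
            Prod.ext_iff.2 ⟨h1.symm, h2.symm⟩
          exact Or.inr ⟨(a, b),
            (by rw [hx']; exact hx : ((Sum.inr a : P ⊕ Q), (Sum.inr b : P ⊕ Q)) ∈ s), hx'⟩
      · rintro (⟨q, hq, rfl⟩ | ⟨q, hq, rfl⟩) <;> exact hq
    have hmemP : sP.Nonempty → sP ∈ (posetMatchingComplex P).faces := by
      intro hnep
      refine ⟨hnep, ?_, ?_, ?_⟩
      · intro q hq
        exact sum_inl_covBy_inl_iff.1 (hcov _ (Finset.mem_preimage.1 hq))
      · intro q hq r hr hqr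
        obtain ⟨d1, d2, d3, d4⟩ := hdis _ (Finset.mem_preimage.1 hq) _
          (Finset.mem_preimage.1 hr) (fun h => hqr (hFinj h))
        exact ⟨fun h => d1 (congrArg Sum.inl h), fun h => d2 (congrArg Sum.inl h),
          fun h => d3 (congrArg Sum.inl h), fun h => d4 (congrArg Sum.inl h)⟩
      · intro hc
        apply hcyc
        refine (hasPosetCycle_image_inl hc).mono ?_
        rintro _ ⟨q, hq, rfl⟩
        have hq' : q ∈ sP := Finset.mem_coe.1 hq
        have hq2 := Finset.mem_preimage.1 hq'
        exact Finset.mem_coe.2 hq2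
    have hmemQ : sQ.Nonempty → sQ ∈ (posetMatchingComplex Q).faces := by
      intro hnep
      refine ⟨hnep, ?_, ?_, ?_⟩
      · intro q hq
        exact sum_inr_covBy_inr_iff.1 (hcov _ (Finset.mem_preimage.1 hq))
      · intro q hq r hr hqr
        obtain ⟨d1, d2, d3, d4⟩ := hdis _ (Finset.mem_preimage.1 hq) _
          (Finset.mem_preimage.1 hr) (fun h => hqr (hGinj h))
        exact ⟨fun h => d1 (congrArg Sum.inr h), fun h => d2 (congrArg Sum.inr h),
          fun h => d3 (congrArg Sum.inr h), fun h => d4 (congrArg Sum.inr h)⟩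
      · intro hc
        apply hcyc
        refine (hasPosetCycle_image_inr hc).mono ?_
        rintro _ ⟨q, hq, rfl⟩
        have hq' : q ∈ sQ := Finset.mem_coe.1 hq
        have hq2 := Finset.mem_preimage.1 hq'
        exact Finset.mem_coe.2 hq2
    by_cases hPne : sP.Nonempty <;> by_cases hQne : sQ.Nonempty
    · exact Or.inr ⟨_, ⟨sP, hmemP hPne, rfl⟩, _, ⟨sQ, hmemQ hQne, rfl⟩, hsplit⟩
    · refine Or.inl (Or.inl ⟨sP, hmemP hPne, ?_⟩)
      rw [hsplit, Finset.not_nonempty_iff_eq_empty.1 hQne, Finset.image_empty,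
        Finset.union_empty]
    · refine Or.inl (Or.inr ⟨sQ, hmemQ hQne, ?_⟩)
      rw [hsplit, Finset.not_nonempty_iff_eq_empty.1 hPne, Finset.image_empty,
        Finset.empty_union]
    · exfalso
      rw [hsplit, Finset.not_nonempty_iff_eq_empty.1 hPne,
        Finset.not_nonempty_iff_eq_empty.1 hQne] at hne
      simp at hne
  · rintro ((⟨A, hA, rfl⟩ | ⟨B, hB, rfl⟩) | ⟨x, ⟨A, hA, rfl⟩, y, ⟨B, hB, rfl⟩, rfl⟩)
    · have h := sum_union_image_mem (P := P) (Q := Q) A ∅ (fun _ => hA)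
        (fun h => absurd h Finset.not_nonempty_empty)
        (by simpa using hA.1)
      simpa using h
    · have h := sum_union_image_mem (P := P) (Q := Q) ∅ B
        (fun h => absurd h Finset.not_nonempty_empty) (fun _ => hB)
        (by simpa using hB.1)
      simpa using h
    · exact sum_union_image_mem A B (fun _ => hA) (fun _ => hB)
        (Finset.Nonempty.mono Finset.subset_union_left (hA.1.image _))
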